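/- Let Λ be a lattice (free abelian group of finite rank) with an integer-valued symmetric bilinear form (·|·), and let Δ ⊆ Λ be a set with Δ = -Δ, spanning Λ over ℤ, and closed under partial summation: if α, β ∈ Δ and (α|β) < 0 then α + β ∈ Δ. If the form is not semi-positive definite (i.e. there exists α ∈ Λ with (α|α) < 0), then there exists δ ∈ Δ with (δ|δ) < 0. -/

import Mathlib

/-- If a free ℤ-module of finite rank with an integer-valued symmetric bilinear form
contains a set Δ with Δ = -Δ, spanning the lattice, closed under partial summation,
and the form is not semi-positive definite, then some element of Δ has negative square length. -/
theorem stmt_0 (Λ : Type*) [AddCommGroup Λ] [Module ℤ Λ]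
    [Module.Free ℤ Λ] [Module.Finite ℤ Λ]
    (B : Λ →ₗ[ℤ] Λ →ₗ[ℤ] ℤ) (hsymm : ∀ x y, B x y = B y x)
    (Δ : Set Λ) (hneg : ∀ a ∈ Δ, -a ∈ Δ)
    (hspan : Submodule.span ℤ Δ = ⊤)
    (hsum : ∀ a ∈ Δ, ∀ b ∈ Δ, B a b < 0 → a + b ∈ Δ)
    (h : ∃ α : Λ, B α α < 0) :
    ∃ δ ∈ Δ, B δ δ < 0 := by
  classical
  by_contra hcon
  push_neg at hcon
  obtain ⟨α, hα⟩ := h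
  -- key: any sum of elements of Δ has nonnegative square
  have key : ∀ n (m : Multiset Λ), m.card = n → (∀ x ∈ m, x ∈ Δ) →
      0 ≤ B m.sum m.sum := by
    intro n
    induction n using Nat.strong_induction_on with
    | _ n ih =>
      intro m hcard hm
      by_contra hlt
      push_neg at hlt
      -- find a ∈ m with B a m.sum < 0
      have h1 : ∃ a ∈ m, B a m.sum < 0 := by
        by_contra hall
        push_neg at hall
        have hsumform : B m.sum m.sum = (m.map (fun a => B a m.sum)).sum := by
          have := map_multiset_sum (B.flip m.sum) m
          simp only [LinearMap.flip_apply] at this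
          exact this
        rw [hsumform] at hlt
        exact absurd (Multiset.sum_nonneg (by
          intro x hx
          obtain ⟨a, ha, rfl⟩ := Multiset.mem_map.mp hx
          exact hall a ha)) (not_le.mpr hlt)
      obtain ⟨a, ham, ha⟩ := h1
      have haΔ := hm a ham
      have hmeq : m = a ::ₘ m.erase a := (Multiset.cons_erase ham).symm
      have ha2 : B a (m.erase a).sum < 0 := by
        rw [hmeq, Multiset.sum_cons, map_add] at ha
        have := hcon a haΔ
        omega
      -- find b ∈ m.erase a with B a b < 0
      have h2 : ∃ b ∈ m.erase a, B a b < 0 := by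
        by_contra hall
        push_neg at hall
        have : B a (m.erase a).sum = ((m.erase a).map (B a)).sum :=
          map_multiset_sum (B a) _
        rw [this] at ha2
        exact absurd (Multiset.sum_nonneg (by
          intro x hx
          obtain ⟨b, hb, rfl⟩ := Multiset.mem_map.mp hx
          exact hall b hb)) (not_le.mpr ha2)
      obtain ⟨b, hbm, hab⟩ := h2
      have hbΔ := hm b (Multiset.mem_of_mem_erase hbm)
      have habΔ := hsum a haΔ b hbΔ hab
      set m' : Multiset Λ := (a + b) ::ₘ ((m.erase a).erase b) with hm'
      have hsumeq : m'.sum = m.sum := by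
        have he : (m.erase a).sum = b + ((m.erase a).erase b).sum := by
          rw [← Multiset.sum_cons, Multiset.cons_erase hbm]
        have he0 : m.sum = a + (m.erase a).sum := by
          nth_rewrite 1 [hmeq]
          rw [Multiset.sum_cons]
        rw [hm', Multiset.sum_cons, he0, he]
        abel
      have hcard' : m'.card = n - 1 := by
        have h1 : 0 < (m.erase a).card := Multiset.card_pos_iff_exists_mem.mpr ⟨b, hbm⟩
        rw [Multiset.card_erase_of_mem ham, hcard] at h1
        rw [hm', Multiset.card_cons, Multiset.card_erase_of_mem hbm,
          Multiset.card_erase_of_mem ham, hcard]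
        simp only [Nat.pred_eq_sub_one] at h1 ⊢
        omega
      have hn : n - 1 < n := by
        have h0 : 0 < m.card := Multiset.card_pos_iff_exists_mem.mpr ⟨a, ham⟩
        omega
      have := ih (n - 1) hn m' hcard' (by
        intro x hx
        rcases Multiset.mem_cons.mp hx with rfl | hx'
        · exact habΔ
        · exact hm x (Multiset.mem_of_mem_erase (Multiset.mem_of_mem_erase hx')))
      rw [hsumeq] at this
      exact absurd this (not_le.mpr hlt)
  -- α is a sum of elements of Δ
  have hS : ∃ m : Multiset Λ, (∀ y ∈ m, y ∈ Δ) ∧ m.sum = α := by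
    let S : AddSubgroup Λ :=
      { carrier := {x | ∃ m : Multiset Λ, (∀ y ∈ m, y ∈ Δ) ∧ m.sum = x}
        zero_mem' := ⟨0, by simp, by simp⟩
        add_mem' := by
          rintro x y ⟨m1, h1, rfl⟩ ⟨m2, h2, rfl⟩
          exact ⟨m1 + m2, by
            intro z hz
            rcases Multiset.mem_add.mp hz with hz | hz
            · exact h1 z hz
            · exact h2 z hz, by rw [Multiset.sum_add]⟩
        neg_mem' := by
          rintro x ⟨m, hmem, rfl⟩
          refine ⟨m.map (fun y => -y), ?_, ?_⟩
          · intro z hz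
            obtain ⟨y, hy, rfl⟩ := Multiset.mem_map.mp hz
            exact hneg y (hmem y hy)
          · simp [Multiset.sum_map_neg'] }
    have hΔS : Δ ⊆ S := by
      intro d hd
      exact ⟨{d}, by simpa using hd, by simp⟩
    have hα' : α ∈ Submodule.span ℤ Δ := hspan ▸ Submodule.mem_top
    exact Submodule.span_induction (fun x hx => hΔS hx) S.zero_mem
      (fun x y _ _ hx hy => S.add_mem hx hy)
      (fun z x _ hx => by
        have h2 := S.zsmul_mem hx z
        rwa [← int_smul_eq_zsmul (inferInstance : Module ℤ Λ) z x] at h2) hα'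
  obtain ⟨m, hmem, hsum'⟩ := hS
  have := key m.card m rfl hmem
  rw [hsum'] at this
  exact absurd this (not_le.mpr hα)
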